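/- Let f(T) = σ + (1-σ)·(1-γ-φ)T/(1-γ-φT) for T ∈ (0,1], with σ ∈ (0,1), γ ∈ (0,1), 0 < φ < 1-γ. If φ < σ(1-γ)/T₀ and T₀ ∈ (1/2, 1), then the sequence T_{i+1} = f(T_i) is nondecreasing and converges to min(1, σ(1-γ)/φ). -/

import Mathlib

theorem low_fee_convergence (σ γ φ : ℝ) (T : ℕ → ℝ)
    (hσ : σ ∈ Set.Ioo (0:ℝ) 1) (hγ : γ ∈ Set.Ioo (0:ℝ) 1)
    (hφ0 : 0 < φ) (hφ1 : φ < 1 - γ)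
    (hφlow : φ < σ * (1 - γ) / T 0)
    (hT0 : T 0 ∈ Set.Ioo (1/2 : ℝ) 1)
    (hrec : ∀ i : ℕ,
      T (i + 1) = σ + (1 - σ) * ((1 - γ - φ) * T i / (1 - γ - φ * T i))) :
    Monotone T ∧
    Filter.Tendsto T Filter.atTop (nhds (min 1 (σ * (1 - γ) / φ))) := by
  obtain ⟨hσ0, hσ1⟩ := hσ
  obtain ⟨hγ0, hγ1⟩ := hγ
  obtain ⟨hT0l, hT0u⟩ := hT0
  set a : ℝ := σ * (1 - γ) / φ with ha
  set L : ℝ := min 1 a with hL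
  have hφγ : 0 < 1 - γ - φ := by linarith
  have hT0pos : 0 < T 0 := by linarith
  have hapos : 0 < a := div_pos (mul_pos hσ0 (by linarith)) hφ0
  have haT0 : T 0 < a := by
    rw [ha, lt_div_iff₀ hφ0]
    have h := (lt_div_iff₀ hT0pos).mp hφlow
    nlinarith
  have hL1 : L ≤ 1 := min_le_left _ _
  have hLa : L ≤ a := min_le_right _ _
  have hLpos : 0 < L := lt_min one_pos hapos
  have hD : ∀ t : ℝ, 0 ≤ t → t ≤ 1 → 0 < 1 - γ - φ * t := by
    intro t h0 h1; nlinarith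
  -- fixed point difference formula
  have hfix : ∀ t : ℝ, 0 ≤ t → t ≤ 1 →
      σ + (1 - σ) * ((1 - γ - φ) * t / (1 - γ - φ * t)) - t
        = (1 - t) * (σ * (1 - γ) - φ * t) / (1 - γ - φ * t) := by
    intro t h0 h1
    have hDt := hD t h0 h1
    field_simp
    ring
  -- L is a fixed point
  have hnum : (1 - L) * (σ * (1 - γ) - φ * L) = 0 := by
    rcases le_total 1 a with h | h
    · rw [hL, min_eq_left h]; ring
    · rw [hL, min_eq_right h, ha]
      field_simp
      ring
  have hfixL : σ + (1 - σ) * ((1 - γ - φ) * L / (1 - γ - φ * L)) = L := by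
    have h := hfix L hLpos.le hL1
    rw [hnum] at h
    simp at h
    linarith
  -- bounds: 0 < T i and T i ≤ L
  have hbound : ∀ i, 0 < T i ∧ T i ≤ L := by
    intro i
    induction i with
    | zero => exact ⟨hT0pos, le_min hT0u.le haT0.le⟩
    | succ n ih =>
      obtain ⟨h1, h2⟩ := ih
      have hTn1 : T n ≤ 1 := h2.trans hL1
      have hDn := hD (T n) h1.le hTn1
      have hDL := hD L hLpos.le hL1
      rw [hrec n]
      constructor
      · have hnn : 0 ≤ (1 - σ) * ((1 - γ - φ) * T n / (1 - γ - φ * T n)) := by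
          apply mul_nonneg (by linarith)
          exact div_nonneg (mul_nonneg hφγ.le h1.le) hDn.le
        linarith
      · -- f (T n) ≤ f L = L
        have hdiff : (σ + (1 - σ) * ((1 - γ - φ) * L / (1 - γ - φ * L)))
            - (σ + (1 - σ) * ((1 - γ - φ) * T n / (1 - γ - φ * T n)))
            = (1 - σ) * (1 - γ - φ) * ((1 - γ) * (L - T n))
              / ((1 - γ - φ * L) * (1 - γ - φ * T n)) := by
          field_simp
          ring
        have hge : 0 ≤ (1 - σ) * (1 - γ - φ) * ((1 - γ) * (L - T n))
              / ((1 - γ - φ * L) * (1 - γ - φ * T n)) := by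
          apply div_nonneg _ (mul_nonneg hDL.le hDn.le)
          apply mul_nonneg (mul_nonneg (by linarith) hφγ.le)
          apply mul_nonneg (by linarith) (by linarith)
        nlinarith [hfixL]
  -- monotone
  have hmono : Monotone T := by
    apply monotone_nat_of_le_succ
    intro n
    obtain ⟨h1, h2⟩ := hbound n
    have hTn1 : T n ≤ 1 := h2.trans hL1
    have hDn := hD (T n) h1.le hTn1
    have h := hfix (T n) h1.le hTn1
    have hTna : T n ≤ a := h2.trans hLa
    have hφa : φ * T n ≤ σ * (1 - γ) := by
      rw [ha, le_div_iff₀ hφ0] at hTna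
      nlinarith
    have hnn : 0 ≤ (1 - T n) * (σ * (1 - γ) - φ * T n) / (1 - γ - φ * T n) :=
      div_nonneg (mul_nonneg (by linarith) (by linarith)) hDn.le
    rw [hrec n]
    linarith
  refine ⟨hmono, ?_⟩
  -- convergence
  have hbdd : BddAbove (Set.range T) := by
    refine ⟨L, ?_⟩
    rintro x ⟨i, rfl⟩
    exact (hbound i).2
  have htend : Filter.Tendsto T Filter.atTop (nhds (⨆ i, T i)) :=
    tendsto_atTop_ciSup hmono hbdd
  set c : ℝ := ⨆ i, T i with hc
  have hcL : c ≤ L := ciSup_le fun i => (hbound i).2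
  have hcT0 : T 0 ≤ c := le_ciSup hbdd 0
  have hcpos : 0 < c := lt_of_lt_of_le hT0pos hcT0
  have hDc := hD c hcpos.le (hcL.trans hL1)
  have hcont : ContinuousAt
      (fun t : ℝ => σ + (1 - σ) * ((1 - γ - φ) * t / (1 - γ - φ * t))) c := by
    apply ContinuousAt.add continuousAt_const
    apply ContinuousAt.mul continuousAt_const
    exact ContinuousAt.div (by fun_prop) (by fun_prop) (ne_of_gt hDc)
  have h2 : Filter.Tendsto
      (fun i => σ + (1 - σ) * ((1 - γ - φ) * T i / (1 - γ - φ * T i)))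
      Filter.atTop (nhds (σ + (1 - σ) * ((1 - γ - φ) * c / (1 - γ - φ * c)))) :=
    hcont.tendsto.comp htend
  have h1 : Filter.Tendsto (fun i => T (i + 1)) Filter.atTop (nhds c) :=
    htend.comp (Filter.tendsto_add_atTop_nat 1)
  have heq : (fun i => T (i + 1))
      = fun i => σ + (1 - σ) * ((1 - γ - φ) * T i / (1 - γ - φ * T i)) :=
    funext hrec
  rw [heq] at h1
  have hfc : σ + (1 - σ) * ((1 - γ - φ) * c / (1 - γ - φ * c)) = c :=
    tendsto_nhds_unique h2 h1
  have hzero : (1 - c) * (σ * (1 - γ) - φ * c) = 0 := by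
    have h := hfix c hcpos.le (hcL.trans hL1)
    rw [hfc, sub_self] at h
    rcases div_eq_zero_iff.mp h.symm with h' | h'
    · exact h'
    · exact absurd h' (ne_of_gt hDc)
  have hcLeq : c = L := by
    rcases mul_eq_zero.mp hzero with h' | h'
    · have hc1 : c = 1 := by linarith
      have : L = 1 := le_antisymm hL1 (hc1 ▸ hcL)
      rw [hc1, this]
    · have hca : c = a := by
        rw [ha]; field_simp; linarith
      exact le_antisymm hcL (hca ▸ (hca ▸ hLa))
  rw [hcLeq] at htend
  exact htend
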